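/- Let G = (U, V, E) be a weighted bipartite graph with second singular value at most λ, let B ⊆ U have stationary measure δ, and let T be the set of vertices v ∈ V such that the fraction of neighbors of v (under the conditional edge distribution) lying in B deviates from δ by more than ε. Then the stationary measure of T is at most λ²·δ/ε². -/

import Mathlib

open Finset

/-- **sampling lemma for bipartite expanders.**
`G = (U, V, E)` is a weighted bipartite graph given by its edge distribution
`p : U → V → ℝ`, with second singular value at most `lam` (hypothesis `hsv`).
Let `B ⊆ U` have stationary measure `δ`, and let `T` be the set of `v ∈ V`
for which the fraction of neighbours of `v` lying in `B` — i.e. the probability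
that `u ∈ B` when `(u,v)` is drawn from the edge distribution conditioned on its
`V`-endpoint being `v` — deviates from `δ` by more than `ε`.
Then the stationary measure of `T` is at most `lam² · δ / ε²`. -/
theorem bipartite_sampling_lemma
    {U V : Type*} [Fintype U] [Fintype V]
    (p : U → V → ℝ) (lam ε δ : ℝ) (hε : 0 < ε)
    (hp : ∀ u v, 0 ≤ p u v)
    (hsum : ∑ u, ∑ v, p u v = 1)
    (hsv : ∀ f : U → ℝ, ∀ g : V → ℝ,
      (∑ u, (∑ v, p u v) * f u) = 0 →
      (∑ v, (∑ u, p u v) * g v) = 0 →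
      |∑ u, ∑ v, p u v * f u * g v| ≤
        lam * Real.sqrt (∑ u, (∑ v, p u v) * (f u) ^ 2) *
          Real.sqrt (∑ v, (∑ u, p u v) * (g v) ^ 2))
    (B : Finset U)
    (hB : ∑ u ∈ B, ∑ v, p u v = δ)
    (T : Finset V)
    (hT : T = Finset.univ.filter
      (fun v => ε < |(∑ u ∈ B, p u v) / (∑ u, p u v) - δ|)) :
    ∑ v ∈ T, ∑ u, p u v ≤ lam ^ 2 * δ / ε ^ 2 := by
  classical
  set μ : U → ℝ := fun u => ∑ v, p u v with hμdef
  set ν : V → ℝ := fun v => ∑ u, p u v with hνdef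
  have hμ0 : ∀ u, 0 ≤ μ u := fun u => Finset.sum_nonneg fun v _ => hp u v
  have hν0 : ∀ v, 0 ≤ ν v := fun v => Finset.sum_nonneg fun u _ => hp u v
  have hμ1 : ∑ u, μ u = 1 := hsum
  have hν1 : ∑ v, ν v = 1 := by
    rw [← hsum]; exact Finset.sum_comm
  have hδ0 : 0 ≤ δ := by
    rw [← hB]; exact Finset.sum_nonneg fun u _ => hμ0 u
  have hpν : ∀ v, ν v = 0 → ∀ u, p u v = 0 := by
    intro v hv u
    exact (Finset.sum_eq_zero_iff_of_nonneg (fun u _ => hp u v)).1 hv u (Finset.mem_univ u)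
  set e : V → ℝ := fun v => (∑ u ∈ B, p u v) / ν v - δ with hedef
  have hνe : ∀ v, ν v * e v = (∑ u ∈ B, p u v) - δ * ν v := by
    intro v
    by_cases h : ν v = 0
    · have hB0 : ∑ u ∈ B, p u v = 0 := Finset.sum_eq_zero fun u _ => hpν v h u
      simp [e, h, hB0]
    · rw [show ν v * e v = ν v * (∑ u ∈ B, p u v) / ν v - ν v * δ by simp only [hedef]; ring,
        mul_div_cancel_left₀ _ h]; ring
  set f : U → ℝ := fun u => (if u ∈ B then (1:ℝ) else 0) - δ with hfdef
  set g : V → ℝ := fun v => if v ∈ T then e v else 0 with hgdef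
  set c : ℝ := ∑ v, ν v * g v with hcdef
  set S : ℝ := ∑ v ∈ T, ν v * (e v) ^ 2 with hSdef
  have hS0 : 0 ≤ S :=
    Finset.sum_nonneg fun v _ => mul_nonneg (hν0 v) (sq_nonneg _)
  -- indicator sum equals δ
  have hind : ∑ u, μ u * (if u ∈ B then (1:ℝ) else 0) = δ := by
    simp only [mul_ite, mul_one, mul_zero]
    rw [Finset.sum_ite_mem, Finset.univ_inter]
    exact hB
  have hf0 : ∑ u, μ u * f u = 0 := by
    simp only [hfdef, mul_sub]
    rw [Finset.sum_sub_distrib, hind, ← Finset.sum_mul, hμ1]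
    ring
  have hgsq : ∑ v, ν v * (g v) ^ 2 = S := by
    have h1 : ∀ v, ν v * (g v) ^ 2 = if v ∈ T then ν v * (e v) ^ 2 else 0 := by
      intro v; by_cases h : v ∈ T <;> simp [hgdef, h]
    rw [Finset.sum_congr rfl fun v _ => h1 v, Finset.sum_ite_mem, Finset.univ_inter]
  have hνesum : ∑ v, ν v * e v = 0 := by
    rw [Finset.sum_congr rfl fun v _ => hνe v, Finset.sum_sub_distrib]
    have h2 : ∑ v, ∑ u ∈ B, p u v = δ := by rw [← hB]; exact Finset.sum_comm
    rw [h2, ← Finset.mul_sum, hν1]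
    ring
  have hνeg : ∑ v, ν v * e v * g v = S := by
    have h1 : ∀ v, ν v * e v * g v = if v ∈ T then ν v * (e v) ^ 2 else 0 := by
      intro v; by_cases h : v ∈ T <;> simp [hgdef, h] <;> ring
    rw [Finset.sum_congr rfl fun v _ => h1 v, Finset.sum_ite_mem, Finset.univ_inter]
  -- centered g
  set g' : V → ℝ := fun v => g v - c with hg'def
  have hg'0 : ∑ v, ν v * g' v = 0 := by
    simp only [hg'def, mul_sub]
    rw [Finset.sum_sub_distrib, ← hcdef, ← Finset.sum_mul, hν1]
    ring
  -- main identity: the bilinear form equals S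
  have hmain : ∑ u, ∑ v, p u v * f u * g' v = S := by
    rw [Finset.sum_comm]
    have hinner : ∀ v, ∑ u, p u v * f u * g' v = ν v * e v * g' v := by
      intro v
      rw [← Finset.sum_mul]
      congr 1
      have : ∑ u, p u v * f u = (∑ u, p u v * (if u ∈ B then (1:ℝ) else 0)) - δ * ν v := by
        simp only [hfdef, mul_sub]
        rw [Finset.sum_sub_distrib]
        congr 1
        rw [← Finset.sum_mul, mul_comm]
      rw [this]
      have hi : ∑ u, p u v * (if u ∈ B then (1:ℝ) else 0) = ∑ u ∈ B, p u v := by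
        simp only [mul_ite, mul_one, mul_zero]
        rw [Finset.sum_ite_mem, Finset.univ_inter]
      rw [hi, ← hνe v]
    rw [Finset.sum_congr rfl fun v _ => hinner v]
    simp only [hg'def, mul_sub]
    rw [Finset.sum_sub_distrib, hνeg]
    have : ∑ v, ν v * e v * c = (∑ v, ν v * e v) * c := by rw [Finset.sum_mul]
    rw [this, hνesum]
    ring
  -- the two variance terms
  have hA : ∑ u, μ u * (f u) ^ 2 = δ - δ ^ 2 := by
    have h1 : ∀ u, μ u * (f u) ^ 2 =
        μ u * (if u ∈ B then (1:ℝ) else 0) * (1 - 2 * δ) + μ u * δ ^ 2 := by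
      intro u; by_cases h : u ∈ B <;> simp [hfdef, h] <;> ring
    rw [Finset.sum_congr rfl fun u _ => h1 u, Finset.sum_add_distrib, ← Finset.sum_mul,
      ← Finset.sum_mul, hind, hμ1]
    ring
  have hA0 : 0 ≤ ∑ u, μ u * (f u) ^ 2 :=
    Finset.sum_nonneg fun u _ => mul_nonneg (hμ0 u) (sq_nonneg _)
  have hAδ : ∑ u, μ u * (f u) ^ 2 ≤ δ := by
    rw [hA]; nlinarith [sq_nonneg δ]
  have hB' : ∑ v, ν v * (g' v) ^ 2 = S - c ^ 2 := by
    have h1 : ∀ v, ν v * (g' v) ^ 2 =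
        ν v * (g v) ^ 2 - 2 * c * (ν v * g v) + ν v * c ^ 2 := by
      intro v; simp only [hg'def]; ring
    rw [Finset.sum_congr rfl fun v _ => h1 v]
    rw [Finset.sum_add_distrib, Finset.sum_sub_distrib, hgsq, ← Finset.mul_sum, ← hcdef,
      ← Finset.sum_mul, hν1]
    ring
  have hB'0 : 0 ≤ ∑ v, ν v * (g' v) ^ 2 :=
    Finset.sum_nonneg fun v _ => mul_nonneg (hν0 v) (sq_nonneg _)
  have hB'S : ∑ v, ν v * (g' v) ^ 2 ≤ S := by
    rw [hB']; nlinarith [sq_nonneg c]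
  -- apply the singular value bound
  have hbound := hsv f g' hf0 hg'0
  rw [hmain, abs_of_nonneg hS0] at hbound
  -- square it
  have hsq : S ^ 2 ≤ lam ^ 2 * (δ * S) := by
    have h1 : S ^ 2 ≤ (lam * Real.sqrt (∑ u, μ u * (f u) ^ 2) *
        Real.sqrt (∑ v, ν v * (g' v) ^ 2)) ^ 2 := pow_le_pow_left₀ hS0 hbound 2
    have h2 : (lam * Real.sqrt (∑ u, μ u * (f u) ^ 2) *
        Real.sqrt (∑ v, ν v * (g' v) ^ 2)) ^ 2 =
        lam ^ 2 * ((∑ u, μ u * (f u) ^ 2) * (∑ v, ν v * (g' v) ^ 2)) := by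
      rw [mul_pow, mul_pow, Real.sq_sqrt hA0, Real.sq_sqrt hB'0]
      ring
    rw [h2] at h1
    refine h1.trans ?_
    apply mul_le_mul_of_nonneg_left _ (sq_nonneg lam)
    exact mul_le_mul hAδ hB'S hB'0 hδ0
  have hSle : S ≤ lam ^ 2 * δ := by
    rcases eq_or_lt_of_le hS0 with h | h
    · rw [← h]; positivity
    · have : S * S ≤ (lam ^ 2 * δ) * S := by nlinarith
      exact le_of_mul_le_mul_right this h
  -- the measure of T is controlled by S
  have hTS : ε ^ 2 * (∑ v ∈ T, ν v) ≤ S := by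
    rw [Finset.mul_sum, hSdef]
    apply Finset.sum_le_sum
    intro v hv
    have hve : ε < |e v| := by
      rw [hT] at hv
      exact (Finset.mem_filter.1 hv).2
    have : ε ^ 2 ≤ (e v) ^ 2 := by
      have := pow_le_pow_left₀ hε.le (le_of_lt hve) 2
      rwa [sq_abs] at this
    calc ε ^ 2 * ν v = ν v * ε ^ 2 := by ring
      _ ≤ ν v * (e v) ^ 2 := mul_le_mul_of_nonneg_left this (hν0 v)
  -- conclude
  have hε2 : (0:ℝ) < ε ^ 2 := by positivity
  have : ∑ v ∈ T, ν v ≤ (lam ^ 2 * δ) / ε ^ 2 := by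
    rw [le_div_iff₀ hε2]
    calc (∑ v ∈ T, ν v) * ε ^ 2 = ε ^ 2 * (∑ v ∈ T, ν v) := by ring
      _ ≤ S := hTS
      _ ≤ lam ^ 2 * δ := hSle
  exact this
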